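/- For a non-increasing sequence (ρ_n)_{n≥0} of nonnegative reals tending to 0 and α > 0, a ≥ 0, the following are equivalent: (i) lim_{n→∞} n^α ρ_n = a; (ii) lim_{s→0⁺} s^{1/α} ν(s) = a^{1/α}, where ν(s) = #{n ≥ 0 : ρ_n > s}. -/

import Mathlib

open Filter

private lemma aux_ratio : Tendsto (fun n : ℕ => (n : ℝ) / ((n : ℝ) - 1)) atTop (nhds 1) := by
  have h1 : Tendsto (fun n : ℕ => (n : ℝ) - 1) atTop atTop :=
    tendsto_atTop_add_const_right _ (-1) tendsto_natCast_atTop_atTop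
  have h2 : Tendsto (fun n : ℕ => 1 + ((n : ℝ) - 1)⁻¹) atTop (nhds (1 + 0)) :=
    tendsto_const_nhds.add h1.inv_tendsto_atTop
  rw [add_zero] at h2
  refine h2.congr' ?_
  filter_upwards [eventually_ge_atTop 2] with n hn
  have h3 : (1 : ℝ) < (n : ℝ) := by exact_mod_cast Nat.lt_of_lt_of_le one_lt_two hn
  have h4 : (n : ℝ) - 1 ≠ 0 := by linarith
  field_simp
  ring

private lemma aux_ratio2 : Tendsto (fun n : ℕ => ((n : ℝ) + 1) / ((n : ℝ) + 2)) atTop (nhds 1) := by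
  have h1 : Tendsto (fun n : ℕ => (n : ℝ) + 2) atTop atTop :=
    tendsto_atTop_add_const_right _ 2 tendsto_natCast_atTop_atTop
  have h2 : Tendsto (fun n : ℕ => 1 - ((n : ℝ) + 2)⁻¹) atTop (nhds (1 - 0)) :=
    tendsto_const_nhds.sub h1.inv_tendsto_atTop
  rw [sub_zero] at h2
  refine h2.congr ?_
  intro n
  have h3 : (0 : ℝ) < (n : ℝ) + 2 := by positivity
  field_simp
  ring

/-- For a non-increasing nonnegative null sequence `ρ` and `α > 0`, `a ≥ 0`:
`n^α ρ_n → a` iff `s^{1/α} ν(s) → a^{1/α}` as `s → 0⁺`, where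
`ν(s) = #{n : ρ_n > s}`. -/
theorem stmt15 (ρ : ℕ → ℝ) (hρ : Antitone ρ) (hρ0 : ∀ n, 0 ≤ ρ n)
    (hlim : Tendsto ρ atTop (nhds 0)) (α a : ℝ) (hα : 0 < α) (ha : 0 ≤ a) :
    Tendsto (fun n : ℕ => (n : ℝ) ^ α * ρ n) atTop (nhds a) ↔
      Tendsto (fun s : ℝ => s ^ (1 / α) * ({n : ℕ | s < ρ n}.ncard : ℝ))
        (nhdsWithin 0 (Set.Ioi 0)) (nhds (a ^ (1 / α))) := by
  set b : ℝ := a ^ (1 / α) with hbdef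
  have h1α : 0 < 1 / α := by positivity
  have hb0 : 0 ≤ b := Real.rpow_nonneg ha _
  set ν : ℝ → ℕ := fun s => sInf {n | ρ n ≤ s} with hνdef
  have hne : ∀ s : ℝ, 0 < s → {n | ρ n ≤ s}.Nonempty := by
    intro s hs
    obtain ⟨n, hn⟩ := (hlim.eventually (eventually_le_nhds hs)).exists
    exact ⟨n, hn⟩
  have hmem : ∀ s : ℝ, 0 < s → ρ (ν s) ≤ s := fun s hs => Nat.sInf_mem (hne s hs)
  have hle : ∀ (s : ℝ) (n : ℕ), ρ n ≤ s → ν s ≤ n := fun s n h => Nat.sInf_le h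
  have hlt : ∀ (s : ℝ) (n : ℕ), n < ν s → s < ρ n := by
    intro s n hn
    by_contra h
    exact absurd (hle s n (not_lt.mp h)) (not_le.mpr hn)
  have hgt : ∀ (s : ℝ) (K : ℕ), 0 < s → s < ρ K → K < ν s := by
    intro s K hs hsK
    by_contra h
    exact absurd ((hρ (not_lt.mp h)).trans (hmem s hs)) (not_le.mpr hsK)
  have hset : ∀ s : ℝ, 0 < s → {n : ℕ | s < ρ n} = Set.Iio (ν s) := by
    intro s hs
    ext n
    simp only [Set.mem_setOf_eq, Set.mem_Iio]
    exact ⟨fun h => hgt s n hs h, hlt s n⟩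
  have hcard : ∀ s : ℝ, 0 < s → ({n : ℕ | s < ρ n}.ncard : ℝ) = (ν s : ℝ) := by
    intro s hs
    rw [hset s hs, ← Finset.coe_Iio, Set.ncard_coe_finset, Nat.card_Iio]
  -- rewrite the RHS in terms of ν
  have hEq : (fun s : ℝ => s ^ (1 / α) * ({n : ℕ | s < ρ n}.ncard : ℝ))
      =ᶠ[nhdsWithin 0 (Set.Ioi 0)] fun s : ℝ => s ^ (1 / α) * (ν s : ℝ) := by
    filter_upwards [self_mem_nhdsWithin] with s hs
    rw [hcard s hs]
  rw [tendsto_congr' hEq]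
  set g : ℕ → ℝ := fun n => (n : ℝ) * ρ n ^ (1 / α) with hgdef
  have hg_eq : ∀ n : ℕ, g n = ((n : ℝ) ^ α * ρ n) ^ (1 / α) := by
    intro n
    rw [Real.mul_rpow (Real.rpow_nonneg (Nat.cast_nonneg n) _) (hρ0 n),
      ← Real.rpow_mul (Nat.cast_nonneg n), mul_one_div_cancel (ne_of_gt hα), Real.rpow_one]
  have hiff : Tendsto (fun n : ℕ => (n : ℝ) ^ α * ρ n) atTop (nhds a) ↔
      Tendsto g atTop (nhds b) := by
    constructor
    · intro h
      have c : ContinuousAt (fun x : ℝ => x ^ (1 / α)) a :=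
        Real.continuousAt_rpow_const a (1 / α) (Or.inr h1α.le)
      exact (c.tendsto.comp h).congr fun n => (hg_eq n).symm
    · intro h
      have c : ContinuousAt (fun x : ℝ => x ^ α) b :=
        Real.continuousAt_rpow_const b α (Or.inr hα.le)
      have h2 : Tendsto (fun n : ℕ => g n ^ α) atTop (nhds (b ^ α)) := c.tendsto.comp h
      have hba : b ^ α = a := by
        rw [hbdef, ← Real.rpow_mul ha, one_div_mul_cancel (ne_of_gt hα), Real.rpow_one]
      rw [hba] at h2
      refine h2.congr fun n => ?_
      rw [hg_eq n, ← Real.rpow_mul (mul_nonneg (Real.rpow_nonneg (Nat.cast_nonneg n) _) (hρ0 n)), one_div_mul_cancel (ne_of_gt hα),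
        Real.rpow_one]
  rw [hiff]
  by_cases hpos : ∀ n, 0 < ρ n
  · -- all terms positive
    have hνtop : Tendsto ν (nhdsWithin 0 (Set.Ioi 0)) atTop := by
      rw [tendsto_atTop]
      intro K
      filter_upwards [Ioo_mem_nhdsGT_of_mem (Set.mem_Ico.mpr ⟨le_refl 0, hpos K⟩)] with s hs
      exact (hgt s K hs.1 hs.2).le
    constructor
    · -- g → b  ⇒  h → b
      intro hg
      have hLl : Tendsto (fun s : ℝ => g (ν s)) (nhdsWithin 0 (Set.Ioi 0)) (nhds b) :=
        hg.comp hνtop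
      have hsub : Tendsto (fun n : ℕ => n - 1) atTop atTop := tendsto_sub_atTop_nat 1
      have hUl : Tendsto (fun s : ℝ => g (ν s - 1) * ((ν s : ℝ) / ((ν s : ℝ) - 1)))
          (nhdsWithin 0 (Set.Ioi 0)) (nhds (b * 1)) :=
        (hg.comp (hsub.comp hνtop)).mul (aux_ratio.comp hνtop)
      rw [mul_one] at hUl
      refine tendsto_of_tendsto_of_tendsto_of_le_of_le' hLl hUl ?_ ?_
      · filter_upwards [self_mem_nhdsWithin] with s hs
        have h1 : ρ (ν s) ^ (1 / α) ≤ s ^ (1 / α) :=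
          Real.rpow_le_rpow (hρ0 _) (hmem s hs) h1α.le
        calc g (ν s) = (ν s : ℝ) * ρ (ν s) ^ (1 / α) := rfl
          _ ≤ (ν s : ℝ) * s ^ (1 / α) := by
              exact mul_le_mul_of_nonneg_left h1 (Nat.cast_nonneg _)
          _ = s ^ (1 / α) * (ν s : ℝ) := mul_comm _ _
      · filter_upwards [self_mem_nhdsWithin,
          hνtop.eventually (eventually_ge_atTop 2)] with s hs hN2
        have hcast : ((ν s - 1 : ℕ) : ℝ) = (ν s : ℝ) - 1 := by
          rw [Nat.cast_sub (by omega)]; norm_num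
        have hd : (0 : ℝ) < (ν s : ℝ) - 1 := by
          have : (2 : ℝ) ≤ (ν s : ℝ) := by exact_mod_cast hN2
          linarith
        have hslt : s < ρ (ν s - 1) := hlt s (ν s - 1) (by omega)
        have h1 : s ^ (1 / α) ≤ ρ (ν s - 1) ^ (1 / α) :=
          Real.rpow_le_rpow hs.le hslt.le h1α.le
        calc s ^ (1 / α) * (ν s : ℝ) ≤ ρ (ν s - 1) ^ (1 / α) * (ν s : ℝ) :=
              mul_le_mul_of_nonneg_right h1 (Nat.cast_nonneg _)
          _ = g (ν s - 1) * ((ν s : ℝ) / ((ν s : ℝ) - 1)) := by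
              show _ = ((ν s - 1 : ℕ) : ℝ) * ρ (ν s - 1) ^ (1 / α) * _
              rw [hcast]
              field_simp
    · -- h → b  ⇒  g → b
      intro hh
      set t : ℕ → ℝ := fun n => ((n : ℝ) + 1) / ((n : ℝ) + 2) with htdef
      have ht_pos : ∀ n, 0 < t n := fun n => by positivity
      have ht_lt1 : ∀ n, t n < 1 := by
        intro n
        rw [htdef, div_lt_one (by positivity)]
        linarith
      have hρ_tend : Tendsto ρ atTop (nhdsWithin 0 (Set.Ioi 0)) :=
        tendsto_nhdsWithin_iff.mpr ⟨hlim, Eventually.of_forall fun n => hpos n⟩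
      have hs'_lt : ∀ n, ρ n * t n < ρ n := fun n =>
        mul_lt_of_lt_one_right (hpos n) (ht_lt1 n)
      have hs'_tend : Tendsto (fun n => ρ n * t n) atTop (nhdsWithin 0 (Set.Ioi 0)) := by
        refine tendsto_nhdsWithin_iff.mpr ⟨?_, Eventually.of_forall fun n => ?_⟩
        · have := hlim.mul aux_ratio2
          rwa [zero_mul] at this
        · exact mul_pos (hpos n) (ht_pos n)
      have hLl : Tendsto (fun n : ℕ => ρ n ^ (1 / α) * (ν (ρ n) : ℝ)) atTop (nhds b) :=
        hh.comp hρ_tend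
      have htT : Tendsto (fun n : ℕ => t n ^ (1 / α)) atTop (nhds 1) := by
        have c : ContinuousAt (fun x : ℝ => x ^ (1 / α)) 1 :=
          Real.continuousAt_rpow_const 1 (1 / α) (Or.inl one_ne_zero)
        have := c.tendsto.comp aux_ratio2
        rwa [Real.one_rpow] at this
      have hUl : Tendsto (fun n : ℕ =>
          ((ρ n * t n) ^ (1 / α) * (ν (ρ n * t n) : ℝ)) / t n ^ (1 / α))
          atTop (nhds (b / 1)) :=
        (hh.comp hs'_tend).div htT one_ne_zero
      rw [div_one] at hUl
      refine tendsto_of_tendsto_of_tendsto_of_le_of_le' hLl hUl ?_ ?_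
      · filter_upwards with n
        have h1 : (ν (ρ n) : ℝ) ≤ (n : ℝ) := by
          exact_mod_cast hle (ρ n) n le_rfl
        calc ρ n ^ (1 / α) * (ν (ρ n) : ℝ) ≤ ρ n ^ (1 / α) * (n : ℝ) :=
              mul_le_mul_of_nonneg_left h1 (Real.rpow_nonneg (hρ0 n) _)
          _ = g n := mul_comm _ _
      · filter_upwards with n
        rw [le_div_iff₀ (Real.rpow_pos_of_pos (ht_pos n) _)]
        have hνge : (n : ℝ) ≤ (ν (ρ n * t n) : ℝ) := by
          have := hgt (ρ n * t n) n (mul_pos (hpos n) (ht_pos n)) (hs'_lt n)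
          exact_mod_cast this.le
        have hmul : (ρ n * t n) ^ (1 / α) = ρ n ^ (1 / α) * t n ^ (1 / α) :=
          Real.mul_rpow (hρ0 n) (ht_pos n).le
        calc g n * t n ^ (1 / α) = (ρ n * t n) ^ (1 / α) * (n : ℝ) := by
              rw [hmul]; show (n : ℝ) * ρ n ^ (1 / α) * _ = _; ring
          _ ≤ (ρ n * t n) ^ (1 / α) * (ν (ρ n * t n) : ℝ) :=
              mul_le_mul_of_nonneg_left hνge
                (Real.rpow_nonneg (mul_pos (hpos n) (ht_pos n)).le _)
  · -- ρ is eventually zero: both limits force the value 0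
    push_neg at hpos
    obtain ⟨n₀, hn₀⟩ := hpos
    have hz : ∀ m, n₀ ≤ m → ρ m = 0 := fun m hm =>
      le_antisymm ((hρ hm).trans hn₀) (hρ0 m)
    have hgz : Tendsto g atTop (nhds 0) := by
      refine tendsto_const_nhds.congr' ?_
      filter_upwards [eventually_ge_atTop n₀] with n hn
      rw [hgdef]
      simp only
      rw [hz n hn, Real.zero_rpow (ne_of_gt h1α), mul_zero]
    have hR0 : Tendsto (fun s : ℝ => s ^ (1 / α) * (ν s : ℝ))
        (nhdsWithin 0 (Set.Ioi 0)) (nhds 0) := by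
      have hup : Tendsto (fun s : ℝ => s ^ (1 / α) * (n₀ : ℝ))
          (nhdsWithin 0 (Set.Ioi 0)) (nhds (0 * (n₀ : ℝ))) := by
        have c : ContinuousAt (fun x : ℝ => x ^ (1 / α)) 0 :=
          Real.continuousAt_rpow_const 0 (1 / α) (Or.inr h1α.le)
        have h0 : (0 : ℝ) ^ (1 / α) = 0 := Real.zero_rpow (ne_of_gt h1α)
        have := (c.tendsto.mono_left (nhdsWithin_le_nhds (s := Set.Ioi (0:ℝ)))).mul_const (n₀ : ℝ)
        rwa [h0] at this
      rw [zero_mul] at hup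
      refine tendsto_of_tendsto_of_tendsto_of_le_of_le' tendsto_const_nhds hup ?_ ?_
      · filter_upwards [self_mem_nhdsWithin] with s hs
        exact mul_nonneg (Real.rpow_nonneg (le_of_lt hs) _) (Nat.cast_nonneg _)
      · filter_upwards [self_mem_nhdsWithin] with s hs
        have h1 : (ν s : ℝ) ≤ (n₀ : ℝ) := by
          exact_mod_cast hle s n₀ (by rw [hz n₀ le_rfl]; exact hs.le)
        exact mul_le_mul_of_nonneg_left h1 (Real.rpow_nonneg hs.le _)
    constructor
    · intro h
      have hb' : b = 0 := tendsto_nhds_unique h hgz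
      rwa [hb']
    · intro h
      have hb' : b = 0 := tendsto_nhds_unique h hR0
      rwa [hb']
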